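/- Let p, p_des : ℝ → ℝ² and ψ, u, v : ℝ → ℝ be such that at time t: p is differentiable with ṗ_x(t) = u(t)·cos ψ(t) − v(t)·sin ψ(t) and ṗ_y(t) = u(t)·sin ψ(t) + v(t)·cos ψ(t); p_des is differentiable at t; the error e(t) = p_des(t) − p(t) is nonzero with e_d(t) = ‖e(t)‖; and ψ_e(t) ∈ ℝ satisfies e_x(t) = e_d(t)·cos(ψ(t) − ψ_e(t)) and e_y(t) = e_d(t)·sin(ψ(t) − ψ_e(t)). Then the distance error t ↦ ‖p_des(t) − p(t)‖ is differentiable at t with derivative ė_d(t) = −u(t)·cos ψ_e(t) + v(t)·sin ψ_e(t) + ṗ_{x,des}(t)·cos(ψ(t) − ψ_e(t)) + ṗ_{y,des}(t)·sin(ψ(t) − ψ_e(t)). -/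

import Mathlib

open Real

/-- Derivative of the distance error `e_d = √((p_{x,des}−p_x)² + (p_{y,des}−p_y)²)` under the
USV kinematics `ṗ_x = u cos ψ − v sin ψ`, `ṗ_y = u sin ψ + v cos ψ`, where the angle `ψ_e`
satisfies `e_x = e_d·cos(ψ−ψ_e)`, `e_y = e_d·sin(ψ−ψ_e)`:
`ė_d = −u cos ψ_e + v sin ψ_e + ṗ_{x,des} cos(ψ−ψ_e) + ṗ_{y,des} sin(ψ−ψ_e)`. -/
theorem stmt_8 (px py pdx pdy ψ u v : ℝ → ℝ) (pdx' pdy' ψe t : ℝ)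
    (hpx : HasDerivAt px (u t * Real.cos (ψ t) - v t * Real.sin (ψ t)) t)
    (hpy : HasDerivAt py (u t * Real.sin (ψ t) + v t * Real.cos (ψ t)) t)
    (hpdx : HasDerivAt pdx pdx' t) (hpdy : HasDerivAt pdy pdy' t)
    (hne : ¬(pdx t - px t = 0 ∧ pdy t - py t = 0))
    (hx : pdx t - px t
      = Real.sqrt ((pdx t - px t) ^ 2 + (pdy t - py t) ^ 2) * Real.cos (ψ t - ψe))
    (hy : pdy t - py t
      = Real.sqrt ((pdx t - px t) ^ 2 + (pdy t - py t) ^ 2) * Real.sin (ψ t - ψe)) :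
    HasDerivAt (fun s => Real.sqrt ((pdx s - px s) ^ 2 + (pdy s - py s) ^ 2))
      (-(u t) * Real.cos ψe + v t * Real.sin ψe
        + pdx' * Real.cos (ψ t - ψe) + pdy' * Real.sin (ψ t - ψe)) t := by
  have hsum : (pdx t - px t) ^ 2 + (pdy t - py t) ^ 2 ≠ 0 := by
    intro h
    exact hne ⟨by nlinarith [sq_nonneg (pdx t - px t), sq_nonneg (pdy t - py t)],
      by nlinarith [sq_nonneg (pdx t - px t), sq_nonneg (pdy t - py t)]⟩
  have hed : Real.sqrt ((pdx t - px t) ^ 2 + (pdy t - py t) ^ 2) ≠ 0 := by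
    rw [Real.sqrt_ne_zero']
    exact lt_of_le_of_ne (by positivity) (Ne.symm hsum)
  have h := (((hpdx.sub hpx).pow 2).add ((hpdy.sub hpy).pow 2)).sqrt hsum
  convert h using 1
  · rfl
  simp only [Pi.sub_apply, Pi.add_apply, Pi.pow_apply]
  set ed := Real.sqrt ((pdx t - px t) ^ 2 + (pdy t - py t) ^ 2) with hdef
  rw [hx, hy]
  field_simp
  rw [Real.cos_sub, Real.sin_sub]
  linear_combination (2 * ed * (u t * Real.cos ψe - v t * Real.sin ψe)) * (Real.sin_sq_add_cos_sq (ψ t))
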